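/- With A, C, S, R, γ as in the CSR construction (λ(A) = 1, C a completely reducible subgraph of the critical graph of A with cyclicity γ, B = (A^γ)*, C and R extracted from columns/rows of B indexed by the critical nodes, S the restriction of A to the critical edges), define P^(t) := C ⊗ S^t ⊗ R. Then P^(t+γ) = P^(t) for all t ≥ 0, i.e., the sequence of CSR products is periodic with period γ from the very beginning. -/

import Mathlib

open scoped NNReal Classical

namespace MaxAlg

/-- Max-times matrix product over `ℝ≥0`. -/
noncomputable def mmul {n : ℕ} (A B : Fin n → Fin n → ℝ≥0) : Fin n → Fin n → ℝ≥0 :=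
  fun i j => Finset.univ.sup fun k => A i k * B k j

/-- Max-algebraic powers of a matrix, with `mpow A 0` the identity. -/
noncomputable def mpow {n : ℕ} (A : Fin n → Fin n → ℝ≥0) : ℕ → (Fin n → Fin n → ℝ≥0)
  | 0 => fun i j => if i = j then 1 else 0
  | (k+1) => mmul A (mpow A k)

/-- Weight of a walk `p` of length `k` (product of the edge weights). -/
noncomputable def pathWeight {n : ℕ} (A : Fin n → Fin n → ℝ≥0) (k : ℕ)
    (p : Fin (k+1) → Fin n) : ℝ≥0 :=
  ∏ t : Fin k, A (p t.castSucc) (p t.succ)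

/-- `p` is a walk in the edge relation `E`. -/
def IsEPath {n : ℕ} (E : Fin n → Fin n → Prop) (k : ℕ) (p : Fin (k+1) → Fin n) : Prop :=
  ∀ t : Fin k, E (p t.castSucc) (p t.succ)

/-- `j` is reachable from `i` in `E` (possibly by the empty path). -/
def Reach {n : ℕ} (E : Fin n → Fin n → Prop) (i j : Fin n) : Prop :=
  ∃ k, ∃ p : Fin (k+1) → Fin n, IsEPath E k p ∧ p 0 = i ∧ p (Fin.last k) = j

/-- Edge relation of the digraph associated with a nonnegative matrix. -/
def edges {n : ℕ} (A : Fin n → Fin n → ℝ≥0) (i j : Fin n) : Prop := A i j ≠ 0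

/-- Lengths of (positive-length) closed walks through `i` in `E`. -/
def cycLen {n : ℕ} (E : Fin n → Fin n → Prop) (i : Fin n) : Set ℕ :=
  {k | 0 < k ∧ ∃ p : Fin (k+1) → Fin n, IsEPath E k p ∧ p 0 = i ∧ p (Fin.last k) = i}

/-- Lengths of all closed walks in `E`. -/
def allCycLen {n : ℕ} (E : Fin n → Fin n → Prop) : Set ℕ :=
  {k | ∃ i, k ∈ cycLen E i}

/-- The gcd of a set of naturals, characterized by the gcd property. -/
noncomputable def setGcd (S : Set ℕ) : ℕ :=
  sInf {d | (∀ s ∈ S, d ∣ s) ∧ ∀ e : ℕ, (∀ s ∈ S, e ∣ s) → e ∣ d}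

/-- Cyclicity of a (completely reducible) digraph: lcm over the nodes of the
gcd of the cycle lengths through that node. -/
noncomputable def graphCyc {n : ℕ} (E : Fin n → Fin n → Prop) : ℕ :=
  Finset.univ.lcm fun i => if (cycLen E i).Nonempty then setGcd (cycLen E i) else 1

/-- The maximum cycle geometric mean `λ(A)`. -/
noncomputable def mcgm {n : ℕ} (A : Fin n → Fin n → ℝ≥0) : ℝ≥0 :=
  sSup {x | ∃ k : ℕ, 0 < k ∧ k ≤ n ∧ ∃ p : Fin (k+1) → Fin n,
    p 0 = p (Fin.last k) ∧ x = pathWeight A k p ^ ((1 : ℝ) / (k : ℝ))}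

/-- The Kleene star `A* = I ⊕ A ⊕ A² ⊕ ⋯` (entrywise supremum of all powers). -/
noncomputable def kleeneStar {n : ℕ} (A : Fin n → Fin n → ℝ≥0) : Fin n → Fin n → ℝ≥0 :=
  fun i j => ⨆ k : ℕ, mpow A k i j

/-- `(i,j)` is a critical edge: it lies on a cycle attaining `λ(A)`. -/
def IsCriticalEdge {n : ℕ} (A : Fin n → Fin n → ℝ≥0) (i j : Fin n) : Prop :=
  ∃ k : ℕ, 0 < k ∧ k ≤ n ∧ ∃ p : Fin (k+1) → Fin n, p 0 = p (Fin.last k) ∧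
    pathWeight A k p ^ ((1 : ℝ) / (k : ℝ)) = mcgm A ∧
    ∃ t : Fin k, p t.castSucc = i ∧ p t.succ = j

/-- A node lying on a critical cycle of `A`. -/
def IsCriticalNode {n : ℕ} (A : Fin n → Fin n → ℝ≥0) (i : Fin n) : Prop :=
  (∃ j, IsCriticalEdge A i j) ∨ (∃ j, IsCriticalEdge A j i)

/-- A completely reducible subgraph of the critical graph of `A`:
every edge is critical, and every edge can be completed to a cycle of the
subgraph (so each weakly connected part is strongly connected). -/
structure CritSubgraph {n : ℕ} (A : Fin n → Fin n → ℝ≥0) where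
  E : Fin n → Fin n → Prop
  critical : ∀ i j, E i j → IsCriticalEdge A i j
  reducible : ∀ i j, E i j → ∃ k, ∃ p : Fin (k+1) → Fin n,
    IsEPath E k p ∧ p 0 = j ∧ p (Fin.last k) = i

/-- Node set `N_c` of the subgraph. -/
def CritSubgraph.Nc {n : ℕ} {A : Fin n → Fin n → ℝ≥0} (G : CritSubgraph A) (i : Fin n) : Prop :=
  (∃ j, G.E i j) ∨ (∃ j, G.E j i)

/-- The matrix `C`: columns of `(A^γ)*` with indices in `N_c`, other columns zero. -/
noncomputable def Cmat {n : ℕ} (A : Fin n → Fin n → ℝ≥0) (G : CritSubgraph A) :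
    Fin n → Fin n → ℝ≥0 :=
  fun i j => if G.Nc j then kleeneStar (mpow A (graphCyc G.E)) i j else 0

/-- The matrix `R`: rows of `(A^γ)*` with indices in `N_c`, other rows zero. -/
noncomputable def Rmat {n : ℕ} (A : Fin n → Fin n → ℝ≥0) (G : CritSubgraph A) :
    Fin n → Fin n → ℝ≥0 :=
  fun i j => if G.Nc i then kleeneStar (mpow A (graphCyc G.E)) i j else 0

/-- The matrix `S`: the restriction of `A` to the edges of the subgraph. -/
noncomputable def Smat {n : ℕ} (A : Fin n → Fin n → ℝ≥0) (G : CritSubgraph A) :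
    Fin n → Fin n → ℝ≥0 :=
  fun i j => if G.E i j then A i j else 0

/-- The CSR product `P^(t) = C ⊗ S^t ⊗ R`. -/
noncomputable def csr {n : ℕ} (A : Fin n → Fin n → ℝ≥0) (G : CritSubgraph A) (t : ℕ) :
    Fin n → Fin n → ℝ≥0 :=
  mmul (mmul (Cmat A G) (mpow (Smat A G) t)) (Rmat A G)

/-- The strongly connected component (as a node set) of `i` in `E`. -/
def scc {n : ℕ} (E : Fin n → Fin n → Prop) (i : Fin n) : Set (Fin n) :=
  {j | Reach E i j ∧ Reach E j i}

/-- The principal submatrix of `A` on the strongly connected component of `i`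
in `D(A)` (other entries zero). -/
noncomputable def compMat {n : ℕ} (A : Fin n → Fin n → ℝ≥0) (i : Fin n) :
    Fin n → Fin n → ℝ≥0 :=
  fun a b => if a ∈ scc (edges A) i ∧ b ∈ scc (edges A) i then A a b else 0

/-- `λ(i)`: the m.c.g.m. of the component of `D(A)` containing `i`. -/
noncomputable def lamNode {n : ℕ} (A : Fin n → Fin n → ℝ≥0) (i : Fin n) : ℝ≥0 :=
  mcgm (compMat A i)

/-- `i` belongs to a nontrivial component of `D(A)` (it lies on a cycle). -/
def Nontrivial' {n : ℕ} (A : Fin n → Fin n → ℝ≥0) (i : Fin n) : Prop :=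
  (cycLen (edges A) i).Nonempty

/-- `γ`: the lcm of the cyclicities of the critical graphs of the nontrivial
components of `D(A)`. -/
noncomputable def gammaU {n : ℕ} (A : Fin n → Fin n → ℝ≥0) : ℕ :=
  Finset.univ.lcm fun i =>
    if Nontrivial' A i then graphCyc (IsCriticalEdge (compMat A i)) else 1

/-- Max-times matrix-vector product. -/
noncomputable def mvec {n : ℕ} (M : Fin n → Fin n → ℝ≥0) (y : Fin n → ℝ≥0) :
    Fin n → ℝ≥0 :=
  fun a => Finset.univ.sup fun k => M a k * y k

/-- `i` strongly accesses `j`: paths of every sufficiently large length exist. -/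
def StrongAccess {n : ℕ} (E : Fin n → Fin n → Prop) (i j : Fin n) : Prop :=
  ∃ T, ∀ t ≥ T, ∃ p : Fin (t+1) → Fin n, IsEPath E t p ∧ p 0 = i ∧ p (Fin.last t) = j


/-! ### Auxiliary machinery for the proof -/

section Aux

variable {n : ℕ}

/-- weight of walk from `i` through vertex list `l`. -/
noncomputable def wgt (A : Fin n → Fin n → ℝ≥0) : Fin n → List (Fin n) → ℝ≥0
  | _, [] => 1
  | i, j :: l => A i j * wgt A j l

/-- endpoint of walk from `i` through `l`. -/
def dst (i : Fin n) (l : List (Fin n)) : Fin n := (i :: l).getLast (List.cons_ne_nil _ _)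

@[simp] lemma dst_nil (i : Fin n) : dst i [] = i := rfl

@[simp] lemma dst_cons (i j : Fin n) (l : List (Fin n)) : dst i (j :: l) = dst j l := by
  simp [dst, List.getLast_cons]

lemma dst_append (i : Fin n) (l₁ l₂ : List (Fin n)) :
    dst i (l₁ ++ l₂) = dst (dst i l₁) l₂ := by
  induction l₁ generalizing i with
  | nil => simp
  | cons j l ih => simp [ih]

@[simp] lemma wgt_nil (A : Fin n → Fin n → ℝ≥0) (i : Fin n) : wgt A i [] = 1 := rfl

@[simp] lemma wgt_cons (A : Fin n → Fin n → ℝ≥0) (i j : Fin n) (l : List (Fin n)) :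
    wgt A i (j :: l) = A i j * wgt A j l := rfl

lemma wgt_append (A : Fin n → Fin n → ℝ≥0) (i : Fin n) (l₁ l₂ : List (Fin n)) :
    wgt A i (l₁ ++ l₂) = wgt A i l₁ * wgt A (dst i l₁) l₂ := by
  induction l₁ generalizing i with
  | nil => simp
  | cons j l ih => simp [ih, mul_assoc]

lemma wgt_le_mpow (A : Fin n → Fin n → ℝ≥0) (i : Fin n) (l : List (Fin n)) :
    wgt A i l ≤ mpow A l.length i (dst i l) := by
  induction l generalizing i with
  | nil => simp [mpow]
  | cons j l ih =>
    simp only [wgt_cons, dst_cons, List.length_cons]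
    show _ ≤ mmul A (mpow A l.length) i (dst j l)
    calc A i j * wgt A j l ≤ A i j * mpow A l.length j (dst j l) :=
          mul_le_mul_right (ih j) _
      _ ≤ _ := Finset.le_sup (f := fun k => A i k * mpow A l.length k (dst j l))
          (Finset.mem_univ j)

lemma mpow_exists_walk (A : Fin n → Fin n → ℝ≥0) :
    ∀ (t : ℕ) (i j : Fin n), mpow A t i j = 0 ∨
      ∃ l : List (Fin n), l.length = t ∧ dst i l = j ∧ wgt A i l = mpow A t i j := by
  intro t
  induction t with
  | zero =>
    intro i j
    by_cases h : i = j
    · exact Or.inr ⟨[], rfl, by simp [h], by simp [mpow, h]⟩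
    · exact Or.inl (by simp [mpow, h])
  | succ t ih =>
    intro i j
    obtain ⟨k0, -, hk0⟩ := Finset.exists_mem_eq_sup Finset.univ ⟨i, Finset.mem_univ i⟩
      (fun k => A i k * mpow A t k j)
    by_cases hz : A i k0 * mpow A t k0 j = 0
    · exact Or.inl (by rw [show mpow A (t+1) i j = _ from hk0, hz])
    · rcases ih k0 j with h0 | ⟨l, hl, hd, hw⟩
      · exact absurd (by rw [h0, mul_zero]) hz
      · exact Or.inr ⟨k0 :: l, by simp [hl], by simp [hd],
          by rw [wgt_cons, hw, show mpow A (t+1) i j = _ from hk0]⟩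

lemma mmul_assoc (A B C : Fin n → Fin n → ℝ≥0) :
    mmul (mmul A B) C = mmul A (mmul B C) := by
  funext i j
  show (Finset.univ.sup fun l => (Finset.univ.sup fun k => A i k * B k l) * C l j) = _
  calc (Finset.univ.sup fun l => (Finset.univ.sup fun k => A i k * B k l) * C l j)
      = Finset.univ.sup fun l => Finset.univ.sup fun k => A i k * B k l * C l j := by
        refine Finset.sup_congr rfl fun l _ => ?_
        rw [NNReal.finset_sup_mul]
    _ = Finset.univ.sup fun k => Finset.univ.sup fun l => A i k * B k l * C l j :=
        Finset.sup_comm _ _ _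
    _ = Finset.univ.sup fun k => A i k * Finset.univ.sup fun l => B k l * C l j := by
        refine Finset.sup_congr rfl fun k _ => ?_
        rw [NNReal.mul_finset_sup]
        simp [mul_assoc]
    _ = _ := rfl

lemma mmul_one_left (M A : Fin n → Fin n → ℝ≥0) :
    mmul (mpow M 0) A = A := by
  funext i j
  show (Finset.univ.sup fun k => (if i = k then 1 else 0) * A k j) = A i j
  apply le_antisymm
  · apply Finset.sup_le
    intro k _
    by_cases h : i = k
    · simp [h]
    · simp [h]
  · calc A i j = (if i = i then 1 else 0) * A i j := by simp
      _ ≤ _ := Finset.le_sup (f := fun k => (if i = k then 1 else 0) * A k j)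
          (Finset.mem_univ i)

lemma mpow_add (A : Fin n → Fin n → ℝ≥0) (a b : ℕ) :
    mpow A (a + b) = mmul (mpow A a) (mpow A b) := by
  induction a with
  | zero => rw [Nat.zero_add, mmul_one_left]
  | succ a ih =>
    rw [Nat.succ_add]
    show mmul A (mpow A (a + b)) = _
    rw [ih, ← mmul_assoc]
    rfl

lemma mpow_mul (A : Fin n → Fin n → ℝ≥0) (a : ℕ) :
    ∀ b : ℕ, mpow (mpow A a) b = mpow A (a * b)
  | 0 => by rw [Nat.mul_zero]; rfl
  | (b+1) => by
    show mmul (mpow A a) (mpow (mpow A a) b) = _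
    rw [mpow_mul A a b, ← mpow_add, Nat.mul_succ, Nat.add_comm]

lemma le_mpow_add (A : Fin n → Fin n → ℝ≥0) (a b : ℕ) (i k j : Fin n) :
    mpow A a i k * mpow A b k j ≤ mpow A (a + b) i j := by
  rw [mpow_add]
  exact Finset.le_sup (f := fun k => mpow A a i k * mpow A b k j) (Finset.mem_univ k)

lemma one_le_mpow_diag (A : Fin n → Fin n → ℝ≥0) (a : ℕ) (k : Fin n)
    (h : 1 ≤ mpow A a k k) : ∀ e : ℕ, 1 ≤ mpow A (a * e) k k
  | 0 => by rw [Nat.mul_zero]; simp [mpow]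
  | (e+1) => by
    calc (1:ℝ≥0) = 1 * 1 := (one_mul 1).symm
      _ ≤ mpow A (a*e) k k * mpow A a k k :=
          mul_le_mul' (one_le_mpow_diag A a k h e) h
      _ ≤ mpow A (a*e + a) k k := le_mpow_add A (a*e) a k k k
      _ = mpow A (a*(e+1)) k k := by rw [Nat.mul_succ]

/-- the list of vertices after the start, for a Fin-indexed walk. -/
def toList {k : ℕ} (p : Fin (k+1) → Fin n) : List (Fin n) :=
  List.ofFn (fun t : Fin k => p t.succ)

@[simp] lemma toList_length {k : ℕ} (p : Fin (k+1) → Fin n) : (toList p).length = k := by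
  simp [toList]

lemma toList_succ {k : ℕ} (p : Fin (k+2) → Fin n) :
    toList p = p 1 :: toList (p ∘ Fin.succ) := by
  simp only [toList, List.ofFn_succ]
  rfl

lemma pathWeight_succ (A : Fin n → Fin n → ℝ≥0) {k : ℕ} (p : Fin (k+2) → Fin n) :
    pathWeight A (k+1) p = A (p 0) (p 1) * pathWeight A k (p ∘ Fin.succ) := by
  simp only [pathWeight]
  rw [Fin.prod_univ_succ]
  refine congrArg (fun x => A (p 0) (p 1) * x) ?_
  refine Finset.prod_congr rfl fun t _ => ?_
  rfl

lemma wgt_toList (A : Fin n → Fin n → ℝ≥0) {k : ℕ} (p : Fin (k+1) → Fin n) :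
    wgt A (p 0) (toList p) = pathWeight A k p := by
  induction k with
  | zero => simp [toList, pathWeight]
  | succ k ih =>
    rw [toList_succ, wgt_cons, pathWeight_succ]
    congr 1
    have := ih (p ∘ Fin.succ)
    simpa using this

lemma dst_toList {k : ℕ} (p : Fin (k+1) → Fin n) :
    dst (p 0) (toList p) = p (Fin.last k) := by
  induction k with
  | zero => simp [toList]
  | succ k ih =>
    rw [toList_succ, dst_cons]
    rw [show p 1 = (p ∘ Fin.succ) 0 from rfl]
    have h2 : dst ((p ∘ Fin.succ) 0) (toList (p ∘ Fin.succ)) = p (Fin.last (k+1)) := by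
      rw [ih (p ∘ Fin.succ)]
      simp [Function.comp, Fin.succ_last]
    exact h2

lemma get_cons_toList {k : ℕ} (p : Fin (k+1) → Fin n) (m : ℕ) (hm : m < k + 1) :
    (p 0 :: toList p).get ⟨m, by simpa using hm⟩ = p ⟨m, hm⟩ := by
  cases m with
  | zero => rfl
  | succ m =>
    have hmk : m < k := by omega
    show (toList p).get ⟨m, by simp [hmk]⟩ = _
    simp only [toList]
    rw [List.get_ofFn]
    congr 1

/-- Fin-indexed walk from a list walk. -/
def fromList (i : Fin n) (l : List (Fin n)) : Fin (l.length + 1) → Fin n :=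
  fun t => (i :: l).get (Fin.cast (by simp) t)

@[simp] lemma fromList_zero (i : Fin n) (l : List (Fin n)) : fromList i l 0 = i := rfl

lemma fromList_cons (i j : Fin n) (l : List (Fin n)) :
    fromList i (j :: l) ∘ Fin.succ = fromList j l := by
  funext t
  rfl

lemma fromList_last (i : Fin n) (l : List (Fin n)) :
    fromList i l (Fin.last _) = dst i l := by
  rw [dst, List.getLast_eq_getElem]
  rfl

lemma pathWeight_fromList (A : Fin n → Fin n → ℝ≥0) (i : Fin n) (l : List (Fin n)) :
    pathWeight A l.length (fromList i l) = wgt A i l := by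
  induction l generalizing i with
  | nil => simp [pathWeight]
  | cons j l ih =>
    show pathWeight A (l.length + 1) (fromList i (j :: l)) = _
    rw [pathWeight_succ, fromList_cons, ih j, wgt_cons]
    rfl

lemma dst_take (l : List (Fin n)) (i : Fin n) (m : ℕ) (hm : m < (i::l).length) :
    dst i (l.take m) = (i :: l).get ⟨m, hm⟩ := by
  induction l generalizing i m with
  | nil =>
    simp at hm
    subst hm
    simp
  | cons j l ih =>
    cases m with
    | zero => simp
    | succ m =>
      have hm' : m < (j :: l).length := by simpa using hm
      show dst i (j :: l.take m) = _
      rw [dst_cons, ih j m hm']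
      rfl

theorem chain_cons' {α : Type*} {R : α → α → Prop} {a b : α} {l : List α} :
    List.Chain R a (b :: l) ↔ R a b ∧ List.Chain R b l := List.isChain_cons_cons

lemma chain_append' (E : Fin n → Fin n → Prop) (i : Fin n) (l₁ l₂ : List (Fin n))
    (h1 : List.Chain E i l₁) (h2 : List.Chain E (dst i l₁) l₂) :
    List.Chain E i (l₁ ++ l₂) := by
  induction l₁ generalizing i with
  | nil => simpa using h2
  | cons j l ih =>
    rw [chain_cons'] at h1
    exact chain_cons'.2 ⟨h1.1, ih j h1.2 (by simpa using h2)⟩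

lemma epath_chain (E : Fin n → Fin n → Prop) {k : ℕ} (p : Fin (k+1) → Fin n)
    (h : IsEPath E k p) : List.Chain E (p 0) (toList p) := by
  induction k with
  | zero => simp [toList, List.Chain.nil]
  | succ k ih =>
    rw [toList_succ, chain_cons']
    constructor
    · exact h 0
    · exact ih (p ∘ Fin.succ) (fun t => by
        have := h t.succ
        exact this)

lemma chain_last_edge (E : Fin n → Fin n → Prop) (l : List (Fin n)) (i : Fin n)
    (hl : l ≠ []) (h : List.Chain E i l) : ∃ j, E j (dst i l) := by
  induction l generalizing i with
  | nil => exact absurd rfl hl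
  | cons x l ih =>
    rw [chain_cons'] at h
    cases l with
    | nil => exact ⟨i, by simpa using h.1⟩
    | cons y l => exact (by simpa using ih x (by simp) h.2)

end Aux

section MCGM

variable {n : ℕ}

lemma rpow_inv_pow (x : ℝ≥0) (k : ℕ) (hk : k ≠ 0) :
    (x ^ ((1:ℝ)/(k:ℝ))) ^ (k:ℕ) = x := by
  rw [← NNReal.rpow_natCast (x ^ ((1:ℝ)/(k:ℝ))) k, ← NNReal.rpow_mul, one_div,
    inv_mul_cancel₀ (by exact_mod_cast hk), NNReal.rpow_one]

lemma le_of_le_pow (x M : ℝ≥0) (k : ℕ) (hk : k ≠ 0) (h : x ≤ M ^ k) :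
    x ^ ((1:ℝ)/(k:ℝ)) ≤ M := by
  calc x ^ ((1:ℝ)/(k:ℝ)) ≤ (M ^ k) ^ ((1:ℝ)/(k:ℝ)) :=
        NNReal.rpow_le_rpow h (by positivity)
    _ = M := by
        rw [← NNReal.rpow_natCast M k, ← NNReal.rpow_mul, mul_one_div,
          div_self (by exact_mod_cast hk), NNReal.rpow_one]

/-- entrywise bound for `A`, at least `1`. -/
noncomputable def Mbnd (A : Fin n → Fin n → ℝ≥0) : ℝ≥0 :=
  1 ⊔ Finset.univ.sup fun a => Finset.univ.sup fun b => A a b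

lemma one_le_Mbnd (A : Fin n → Fin n → ℝ≥0) : 1 ≤ Mbnd A := le_sup_left

lemma entry_le_Mbnd (A : Fin n → Fin n → ℝ≥0) (a b : Fin n) : A a b ≤ Mbnd A :=
  le_trans (le_trans (Finset.le_sup (f := fun b => A a b) (Finset.mem_univ b))
    (Finset.le_sup (f := fun a => Finset.univ.sup fun b => A a b) (Finset.mem_univ a)))
    le_sup_right

lemma wgt_le_Mpow (A : Fin n → Fin n → ℝ≥0) (i : Fin n) (l : List (Fin n)) :
    wgt A i l ≤ Mbnd A ^ l.length := by
  induction l generalizing i with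
  | nil => simp
  | cons j l ih =>
    rw [wgt_cons, List.length_cons, pow_succ, mul_comm (Mbnd A ^ l.length)]
    exact mul_le_mul' (entry_le_Mbnd A i j) (ih j)

lemma pathWeight_le_Mpow (A : Fin n → Fin n → ℝ≥0) (k : ℕ) (p : Fin (k+1) → Fin n) :
    pathWeight A k p ≤ Mbnd A ^ k := by
  calc pathWeight A k p = ∏ t : Fin k, A (p t.castSucc) (p t.succ) := rfl
    _ ≤ ∏ _t : Fin k, Mbnd A := Finset.prod_le_prod' fun t _ => entry_le_Mbnd A _ _
    _ = Mbnd A ^ k := by simp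

lemma bddAbove_mcgmSet (A : Fin n → Fin n → ℝ≥0) :
    BddAbove {x | ∃ k : ℕ, 0 < k ∧ k ≤ n ∧ ∃ p : Fin (k+1) → Fin n,
      p 0 = p (Fin.last k) ∧ x = pathWeight A k p ^ ((1 : ℝ) / (k : ℝ))} := by
  refine ⟨Mbnd A, fun x hx => ?_⟩
  obtain ⟨k, hk, -, p, -, hx⟩ := hx
  rw [hx]
  exact le_of_le_pow _ _ k hk.ne' (pathWeight_le_Mpow A k p)

variable {A : Fin n → Fin n → ℝ≥0} (h1 : mcgm A = 1)

include h1

/-- closed walks of length between 1 and n have weight at most 1. -/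
lemma cyc_le_one (i : Fin n) (l : List (Fin n)) (h0 : l ≠ [])
    (hn : l.length ≤ n) (hc : dst i l = i) : wgt A i l ≤ 1 := by
  have hk : l.length ≠ 0 := by simpa using h0
  have mem : wgt A i l ^ ((1:ℝ)/(l.length : ℝ)) ∈ {x | ∃ k : ℕ, 0 < k ∧ k ≤ n ∧
      ∃ p : Fin (k+1) → Fin n, p 0 = p (Fin.last k) ∧
      x = pathWeight A k p ^ ((1 : ℝ) / (k : ℝ))} := by
    refine ⟨l.length, Nat.pos_of_ne_zero hk, hn, fromList i l, ?_, ?_⟩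
    · rw [fromList_zero, fromList_last, hc]
    · rw [pathWeight_fromList]
  have hle : wgt A i l ^ ((1:ℝ)/(l.length : ℝ)) ≤ 1 := by
    have h2 := le_csSup (bddAbove_mcgmSet A) mem
    rw [← h1]
    exact h2
  calc wgt A i l = (wgt A i l ^ ((1:ℝ)/(l.length : ℝ))) ^ l.length :=
        (rpow_inv_pow _ _ hk).symm
    _ ≤ 1 := pow_le_one' hle _

lemma splice_core (i : Fin n) (l : List (Fin n)) (s t : ℕ) (hst : s < t)
    (htn : t - s ≤ n) (htl : t ≤ l.length)
    (heq : dst i (l.take s) = dst i (l.take t)) :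
    ∃ l' : List (Fin n), l'.length < l.length ∧ dst i l' = dst i l ∧
      wgt A i l ≤ wgt A i l' := by
  set m := (l.take t).drop s with hm
  have h0 : (l.take t).take s = l.take s := by
    rw [List.take_take]
    congr 1
    omega
  have hlt : l.take t = l.take s ++ m := by
    rw [hm, ← h0, List.take_append_drop]
  have hl : l = l.take s ++ m ++ l.drop t := by
    rw [← hlt, List.take_append_drop]
  have hmlen : m.length = t - s := by
    rw [hm, List.length_drop, List.length_take, min_eq_left htl]
  have hm0 : m ≠ [] := by
    intro h
    rw [h] at hmlen
    simp at hmlen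
    omega
  have hdm : dst (dst i (l.take s)) m = dst i (l.take t) := by
    rw [← dst_append, ← hlt]
  have hclosed : dst (dst i (l.take s)) m = dst i (l.take s) := by
    rw [hdm, ← heq]
  have hmle : wgt A (dst i (l.take s)) m ≤ 1 :=
    cyc_le_one h1 _ m hm0 (by omega) hclosed
  refine ⟨l.take s ++ l.drop t, ?_, ?_, ?_⟩
  · rw [List.length_append, List.length_take, List.length_drop,
      min_eq_left (by omega)]
    omega
  · rw [dst_append, heq, ← dst_append, List.take_append_drop]
  · calc wgt A i l = wgt A i (l.take s ++ m ++ l.drop t) := by rw [← hl]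
      _ = wgt A i (l.take s) * wgt A (dst i (l.take s)) m *
          wgt A (dst (dst i (l.take s)) m) (l.drop t) := by
            rw [wgt_append, wgt_append, dst_append]
      _ ≤ wgt A i (l.take s) * 1 *
          wgt A (dst (dst i (l.take s)) m) (l.drop t) := by
            exact mul_le_mul_left (mul_le_mul_right hmle _) _
      _ = wgt A i (l.take s) * wgt A (dst i (l.take s)) (l.drop t) := by
            rw [mul_one, hclosed]
      _ = wgt A i (l.take s ++ l.drop t) := (wgt_append A i _ _).symm

lemma splice (i : Fin n) (l : List (Fin n)) (hl : n < l.length) :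
    ∃ l' : List (Fin n), l'.length < l.length ∧ dst i l' = dst i l ∧
      wgt A i l ≤ wgt A i l' := by
  have hcard : Fintype.card (Fin n) < Fintype.card (Fin (n+1)) := by simp
  have hbnd : ∀ m : Fin (n+1), (m : ℕ) < (i :: l).length := by
    intro m
    have := m.2
    simp only [List.length_cons]
    omega
  obtain ⟨a, b, hab, heq⟩ := Fintype.exists_ne_map_eq_of_card_lt
    (fun m : Fin (n+1) => (i :: l).get ⟨m, hbnd m⟩) hcard
  have hab' : (a : ℕ) ≠ (b : ℕ) := fun h => hab (Fin.ext h)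
  have key : ∀ s t : Fin (n+1), (s : ℕ) < (t : ℕ) →
      (i :: l).get ⟨s, hbnd s⟩ = (i :: l).get ⟨t, hbnd t⟩ →
      ∃ l' : List (Fin n), l'.length < l.length ∧ dst i l' = dst i l ∧
        wgt A i l ≤ wgt A i l' := by
    intro s t hst hgeq
    refine splice_core h1 i l s t hst (by have := t.2; omega)
      (by have := t.2; omega) ?_
    rw [dst_take l i s (hbnd s), dst_take l i t (hbnd t), hgeq]
  rcases Nat.lt_or_ge (a : ℕ) (b : ℕ) with h | h
  · exact key a b h heq
  · exact key b a (by omega) heq.symm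

lemma closed_le_one (i : Fin n) (l : List (Fin n)) (hc : dst i l = i) :
    wgt A i l ≤ 1 := by
  generalize hL : l.length = L
  induction L using Nat.strong_induction_on generalizing l with
  | _ L ih =>
    rcases Nat.eq_zero_or_pos L with h0 | hpos
    · subst h0
      rw [List.length_eq_zero_iff] at hL
      subst hL
      simp
    · rcases le_or_gt l.length n with hn | hn
      · exact cyc_le_one h1 i l (by intro h; subst h; simp at hL; omega) hn hc
      · obtain ⟨l', hlen, hdst, hwgt⟩ := splice h1 i l hn
        exact le_trans hwgt (ih l'.length (by omega) l' (by rw [hdst]; exact hc) rfl)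

lemma wgt_le_bound (i : Fin n) (l : List (Fin n)) :
    wgt A i l ≤ Mbnd A ^ n := by
  generalize hL : l.length = L
  induction L using Nat.strong_induction_on generalizing i l with
  | _ L ih =>
    rcases le_or_gt l.length n with hn | hn
    · exact le_trans (wgt_le_Mpow A i l)
        (pow_le_pow_right' (one_le_Mbnd A) hn)
    · obtain ⟨l', hlen, -, hwgt⟩ := splice h1 i l hn
      exact le_trans hwgt (ih l'.length (by omega) i l' rfl)

lemma mpow_le_bound (t : ℕ) (i j : Fin n) : mpow A t i j ≤ Mbnd A ^ n := by
  rcases mpow_exists_walk A t i j with h | ⟨l, -, -, hw⟩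
  · simp [h]
  · rw [← hw]
    exact wgt_le_bound h1 i l

omit h1 in
lemma split_cycle (i : Fin n) (l : List (Fin n)) (s : ℕ) (hs : s < l.length)
    (hdl : dst i l = i) :
    ∃ m : List (Fin n), dst (l.get ⟨s, hs⟩) m = dst i (l.take s) ∧
      A (dst i (l.take s)) (l.get ⟨s, hs⟩) * wgt A (l.get ⟨s, hs⟩) m = wgt A i l := by
  have hdrop : l.drop s = l.get ⟨s, hs⟩ :: l.drop (s+1) := List.drop_eq_getElem_cons hs
  have hsplit : l = l.take s ++ (l.get ⟨s, hs⟩ :: l.drop (s+1)) := by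
    rw [← hdrop, List.take_append_drop]
  have hw : wgt A i l = wgt A i (l.take s) *
      (A (dst i (l.take s)) (l.get ⟨s, hs⟩) * wgt A (l.get ⟨s, hs⟩) (l.drop (s+1))) := by
    conv_lhs => rw [hsplit]
    rw [wgt_append, wgt_cons]
  have hdd : dst (l.get ⟨s, hs⟩) (l.drop (s+1)) = i := by
    have h2 : dst i l = dst (dst i (l.take s)) (l.get ⟨s, hs⟩ :: l.drop (s+1)) := by
      conv_lhs => rw [hsplit]
      rw [dst_append]
    rw [dst_cons] at h2
    rw [← h2, hdl]
  refine ⟨l.drop (s+1) ++ l.take s, ?_, ?_⟩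
  · rw [dst_append, hdd]
  · rw [wgt_append, hdd, hw]
    ring

/-- every critical edge admits a "complementary" walk multiplying to 1. -/
lemma critical_complement (u v : Fin n) (h : IsCriticalEdge A u v) :
    ∃ m : List (Fin n), dst v m = u ∧ A u v * wgt A v m = 1 := by
  obtain ⟨k, hk, -, p, hcl, hwt, τ, hu, hv⟩ := h
  have hk0 : k ≠ 0 := hk.ne'
  have hpw : pathWeight A k p = 1 := by
    rw [h1] at hwt
    calc pathWeight A k p
        = (pathWeight A k p ^ ((1:ℝ)/(k:ℝ))) ^ k := (rpow_inv_pow _ _ hk0).symm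
      _ = 1 ^ k := by rw [hwt]
      _ = 1 := one_pow k
  have hlen : (toList p).length = k := toList_length p
  have hwl : wgt A (p 0) (toList p) = 1 := by rw [wgt_toList, hpw]
  have hdl : dst (p 0) (toList p) = p 0 := by rw [dst_toList, ← hcl]
  have hs : (τ : ℕ) < (toList p).length := by rw [hlen]; exact τ.2
  obtain ⟨m, hm1, hm2⟩ := split_cycle (A := A) (p 0) (toList p) (τ : ℕ) hs hdl
  have hget : (toList p).get ⟨(τ : ℕ), hs⟩ = v := by
    have h3 : (toList p).get ⟨(τ : ℕ), hs⟩ = p (⟨(τ : ℕ), τ.2⟩ : Fin k).succ := by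
      simp only [toList]
      rw [List.get_ofFn]
      congr 1
    rw [h3, ← hv]
  have htake : dst (p 0) ((toList p).take (τ : ℕ)) = u := by
    have hm' : (τ : ℕ) < (p 0 :: toList p).length := by
      rw [List.length_cons, hlen]
      exact Nat.lt_succ_of_lt τ.2
    rw [dst_take (toList p) (p 0) (τ : ℕ) hm']
    have h4 := get_cons_toList p (τ : ℕ) (Nat.lt_succ_of_lt τ.2)
    rw [show ((p 0 :: toList p).get ⟨(τ:ℕ), hm'⟩) = p ⟨(τ:ℕ), Nat.lt_succ_of_lt τ.2⟩ from h4, ← hu]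
    exact congrArg p (Fin.ext rfl)
  rw [hget, htake] at hm1 hm2
  exact ⟨m, hm1, by rw [hm2, hwl]⟩

end MCGM

section CSRProof

variable {n : ℕ} {A : Fin n → Fin n → ℝ≥0} (h1 : mcgm A = 1) (G : CritSubgraph A)

omit h1 in
lemma Smat_chain_wgt (i : Fin n) (l : List (Fin n)) (hc : List.Chain G.E i l) :
    wgt (Smat A G) i l = wgt A i l := by
  induction l generalizing i with
  | nil => simp
  | cons j l ih =>
    rw [chain_cons'] at hc
    rw [wgt_cons, wgt_cons, ih j hc.2]
    congr 1
    simp [Smat, hc.1]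

omit h1 in
lemma Smat_wgt_chain (i : Fin n) (l : List (Fin n)) (h : wgt (Smat A G) i l ≠ 0) :
    List.Chain G.E i l := by
  induction l generalizing i with
  | nil => exact List.Chain.nil
  | cons j l ih =>
    rw [wgt_cons] at h
    have h1 : Smat A G i j ≠ 0 := fun hz => h (by rw [hz, zero_mul])
    have h2 : wgt (Smat A G) j l ≠ 0 := fun hz => h (by rw [hz, mul_zero])
    have hE : G.E i j := by
      by_contra hE
      exact h1 (by simp [Smat, hE])
    exact chain_cons'.2 ⟨hE, ih j h2⟩

include h1 in
/-- closed walks in the critical subgraph have weight at least 1. -/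
lemma chain_closed_ge_one (i : Fin n) (l : List (Fin n))
    (hc : List.Chain G.E i l) (hd : dst i l = i) : 1 ≤ wgt A i l := by
  -- build a complementary walk
  have compl : ∀ (l : List (Fin n)) (i : Fin n), List.Chain G.E i l →
      ∃ m : List (Fin n), dst (dst i l) m = i ∧ wgt A (dst i l) m * wgt A i l = 1 := by
    intro l
    induction l with
    | nil => exact fun i _ => ⟨[], by simp, by simp⟩
    | cons j l ih =>
      intro i hc
      rw [chain_cons'] at hc
      obtain ⟨m', hm'd, hm'w⟩ := ih j hc.2
      obtain ⟨m₀, hm₀d, hm₀w⟩ := critical_complement h1 i j (G.critical i j hc.1)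
      refine ⟨m' ++ m₀, ?_, ?_⟩
      · rw [dst_append, dst_cons, hm'd, hm₀d]
      · rw [dst_cons, wgt_append, hm'd, wgt_cons]
        calc wgt A (dst j l) m' * wgt A j m₀ * (A i j * wgt A j l)
            = (wgt A (dst j l) m' * wgt A j l) * (A i j * wgt A j m₀) := by ring
          _ = 1 := by rw [hm'w, hm₀w, one_mul]
  obtain ⟨m, hmd, hmw⟩ := compl l i hc
  rw [hd] at hmd hmw
  have hmle : wgt A i m ≤ 1 := closed_le_one h1 i m hmd
  by_contra hlt
  push_neg at hlt
  have : wgt A i m * wgt A i l < 1 := by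
    calc wgt A i m * wgt A i l ≤ 1 * wgt A i l := mul_le_mul_left hmle _
      _ = wgt A i l := one_mul _
      _ < 1 := hlt
  rw [hmw] at this
  exact lt_irrefl 1 this

include h1 in
/-- every node of `N_c` carries a closed critical walk, giving a diagonal
entry of a power of `S` at least 1. -/
lemma Nc_diag (k : Fin n) (hk : G.Nc k) :
    ∃ c : ℕ, 1 ≤ c ∧ 1 ≤ mpow (Smat A G) c k k := by
  -- get a closed chain through k
  have hcyc : ∃ l : List (Fin n), l ≠ [] ∧ List.Chain G.E k l ∧ dst k l = k := by
    rcases hk with ⟨j, hj⟩ | ⟨j, hj⟩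
    · obtain ⟨r, q, hq, hq0, hqlast⟩ := G.reducible k j hj
      refine ⟨j :: toList q, by simp, ?_, ?_⟩
      · refine chain_cons'.2 ⟨hj, ?_⟩
        have := epath_chain G.E q hq
        rwa [hq0] at this
      · rw [dst_cons, show j = q 0 from hq0.symm, dst_toList, hqlast]
    · obtain ⟨r, q, hq, hq0, hqlast⟩ := G.reducible j k hj
      refine ⟨toList q ++ [k], ?_, ?_, ?_⟩
      · simp
      · refine chain_append' G.E k (toList q) [k] ?_ ?_
        · have := epath_chain G.E q hq
          rwa [hq0] at this
        · have hd : dst k (toList q) = j := by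
            rw [show k = q 0 from hq0.symm, dst_toList]
            exact hqlast
          rw [hd]
          exact chain_cons'.2 ⟨hj, List.Chain.nil⟩
      · rw [dst_append]
        simp
  obtain ⟨l, hl0, hlc, hld⟩ := hcyc
  refine ⟨l.length, ?_, ?_⟩
  · cases l with
    | nil => exact absurd rfl hl0
    | cons x l => simp
  · have hge : 1 ≤ wgt A k l := chain_closed_ge_one h1 G k l hlc hld
    have heq : wgt (Smat A G) k l = wgt A k l := Smat_chain_wgt G k l hlc
    calc (1:ℝ≥0) ≤ wgt A k l := hge
      _ = wgt (Smat A G) k l := heq.symm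
      _ ≤ mpow (Smat A G) l.length k (dst k l) := wgt_le_mpow _ k l
      _ = mpow (Smat A G) l.length k k := by rw [hld]

include h1 in
lemma le_kleene (m : ℕ) (i j : Fin n) :
    mpow A (graphCyc G.E * m) i j ≤ kleeneStar (mpow A (graphCyc G.E)) i j := by
  have hbdd : BddAbove (Set.range fun k => mpow (mpow A (graphCyc G.E)) k i j) := by
    refine ⟨Mbnd A ^ n, ?_⟩
    rintro x ⟨k, rfl⟩
    show mpow (mpow A (graphCyc G.E)) k i j ≤ _
    rw [mpow_mul]
    exact mpow_le_bound h1 _ i j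
  calc mpow A (graphCyc G.E * m) i j
      = mpow (mpow A (graphCyc G.E)) m i j := by rw [mpow_mul]
    _ ≤ _ := le_ciSup hbdd m

include h1 in
lemma kleene_absorb (i k k' : Fin n) :
    kleeneStar (mpow A (graphCyc G.E)) i k * mpow A (graphCyc G.E) k k' ≤
      kleeneStar (mpow A (graphCyc G.E)) i k' := by
  set γ := graphCyc G.E with hγ
  set c := mpow A γ k k' with hc
  by_cases hc0 : c = 0
  · rw [hc0, mul_zero]
    exact zero_le
  have step : ∀ m : ℕ, mpow (mpow A γ) m i k * c ≤ kleeneStar (mpow A γ) i k' := by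
    intro m
    calc mpow (mpow A γ) m i k * c
        = mpow A (γ * m) i k * mpow A γ k k' := by rw [mpow_mul, hc]
      _ ≤ mpow A (γ * m + γ) i k' := le_mpow_add A (γ*m) γ i k k'
      _ = mpow A (γ * (m+1)) i k' := by rw [Nat.mul_succ]
      _ ≤ _ := le_kleene h1 G (m+1) i k'
  have hsup : kleeneStar (mpow A γ) i k ≤ kleeneStar (mpow A γ) i k' / c := by
    refine ciSup_le fun m => ?_
    rw [le_div_iff₀ (pos_iff_ne_zero.mpr hc0)]
    exact step m
  calc kleeneStar (mpow A γ) i k * c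
      ≤ (kleeneStar (mpow A γ) i k' / c) * c := mul_le_mul_left hsup c
    _ = kleeneStar (mpow A γ) i k' := div_mul_cancel₀ _ hc0

include h1 in
/-- the key absorption: `C ⊗ S^γ ≤ C`. -/
lemma Cmat_absorb (hγ : 1 ≤ graphCyc G.E) (i k k' : Fin n) :
    Cmat A G i k * mpow (Smat A G) (graphCyc G.E) k k' ≤ Cmat A G i k' := by
  by_cases hCk : Cmat A G i k = 0
  · rw [hCk, zero_mul]
    exact zero_le
  by_cases hS : mpow (Smat A G) (graphCyc G.E) k k' = 0
  · rw [hS, mul_zero]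
    exact zero_le
  -- k' is in N_c
  obtain ⟨l, hllen, hld, hlw⟩ := (mpow_exists_walk (Smat A G) (graphCyc G.E) k k').resolve_left hS
  have hl0 : l ≠ [] := by
    intro h
    rw [h] at hllen
    simp at hllen
    omega
  have hchain : List.Chain G.E k l := Smat_wgt_chain G k l (by rw [hlw]; exact hS)
  have hNck' : G.Nc k' := by
    obtain ⟨j, hj⟩ := chain_last_edge G.E l k hl0 hchain
    rw [hld] at hj
    exact Or.inr ⟨j, hj⟩
  have hCk' : Cmat A G i k' = kleeneStar (mpow A (graphCyc G.E)) i k' := by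
    simp [Cmat, hNck']
  have hCkeq : Cmat A G i k = kleeneStar (mpow A (graphCyc G.E)) i k := by
    by_cases hNck : G.Nc k
    · simp [Cmat, hNck]
    · exact absurd (by simp [Cmat, hNck]) hCk
  have hwA : wgt A k l ≤ mpow A (graphCyc G.E) k k' := by
    have := wgt_le_mpow A k l
    rw [hllen, hld] at this
    exact this
  calc Cmat A G i k * mpow (Smat A G) (graphCyc G.E) k k'
      = kleeneStar (mpow A (graphCyc G.E)) i k * wgt (Smat A G) k l := by
        rw [hCkeq, hlw]
    _ = kleeneStar (mpow A (graphCyc G.E)) i k * wgt A k l := by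
        rw [Smat_chain_wgt G k l hchain]
    _ ≤ kleeneStar (mpow A (graphCyc G.E)) i k * mpow A (graphCyc G.E) k k' :=
        mul_le_mul_right hwA _
    _ ≤ kleeneStar (mpow A (graphCyc G.E)) i k' := kleene_absorb h1 G i k k'
    _ = Cmat A G i k' := hCk'.symm

omit h1 in
lemma term_le_csr (t : ℕ) (i j k l : Fin n) :
    Cmat A G i k * mpow (Smat A G) t k l * Rmat A G l j ≤ csr A G t i j := by
  calc Cmat A G i k * mpow (Smat A G) t k l * Rmat A G l j
      ≤ (Finset.univ.sup fun k' => Cmat A G i k' * mpow (Smat A G) t k' l) * Rmat A G l j :=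
        mul_le_mul_left (Finset.le_sup (f := fun k' => Cmat A G i k' * mpow (Smat A G) t k' l)
          (Finset.mem_univ k)) _
    _ ≤ csr A G t i j :=
        Finset.le_sup (f := fun l' => mmul (Cmat A G) (mpow (Smat A G) t) i l' * Rmat A G l' j)
          (Finset.mem_univ l)

include h1 in
lemma csr_le (hγ : 1 ≤ graphCyc G.E) (t : ℕ) (i j : Fin n) :
    csr A G (t + graphCyc G.E) i j ≤ csr A G t i j := by
  set γ := graphCyc G.E with hγdef
  show (Finset.univ.sup fun l => mmul (Cmat A G) (mpow (Smat A G) (t+γ)) i l * Rmat A G l j) ≤ _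
  refine Finset.sup_le fun l _ => ?_
  rw [show mmul (Cmat A G) (mpow (Smat A G) (t+γ)) i l =
    Finset.univ.sup fun k => Cmat A G i k * mpow (Smat A G) (t+γ) k l from rfl]
  rw [NNReal.finset_sup_mul]
  refine Finset.sup_le fun k _ => ?_
  have hsplit : mpow (Smat A G) (t + γ) k l =
      Finset.univ.sup fun k' => mpow (Smat A G) γ k k' * mpow (Smat A G) t k' l := by
    rw [Nat.add_comm t γ, mpow_add]
    rfl
  rw [hsplit, NNReal.mul_finset_sup, NNReal.finset_sup_mul]
  refine Finset.sup_le fun k' _ => ?_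
  calc Cmat A G i k * (mpow (Smat A G) γ k k' * mpow (Smat A G) t k' l) * Rmat A G l j
      = (Cmat A G i k * mpow (Smat A G) γ k k') * mpow (Smat A G) t k' l * Rmat A G l j := by
        ring
    _ ≤ Cmat A G i k' * mpow (Smat A G) t k' l * Rmat A G l j := by
        exact mul_le_mul_left (mul_le_mul_left (Cmat_absorb h1 G hγ i k k') _) _
    _ ≤ csr A G t i j := term_le_csr G t i j k' l

include h1 in
lemma csr_ge (hγ : 1 ≤ graphCyc G.E) (t : ℕ) (i j : Fin n) :
    csr A G t i j ≤ csr A G (t + graphCyc G.E) i j := by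
  set γ := graphCyc G.E with hγdef
  -- a uniform multiple m with S^{mγ} having unit diagonal on N_c
  have hc : ∀ k : Fin n, ∃ c : ℕ, 1 ≤ c ∧ (G.Nc k → 1 ≤ mpow (Smat A G) c k k) := by
    intro k
    by_cases hk : G.Nc k
    · obtain ⟨c, hc1, hc2⟩ := Nc_diag h1 G k hk
      exact ⟨c, hc1, fun _ => hc2⟩
    · exact ⟨1, le_refl 1, fun h => absurd h hk⟩
  choose c hc1 hc2 using hc
  obtain ⟨m, hm1, hdiag⟩ : ∃ m : ℕ, 1 ≤ m ∧
      ∀ k : Fin n, G.Nc k → 1 ≤ mpow (Smat A G) (m * γ) k k := by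
    refine ⟨∏ k : Fin n, c k, Finset.one_le_prod' fun k _ => hc1 k, ?_⟩
    intro k hk
    obtain ⟨e, he⟩ : c k ∣ ∏ k : Fin n, c k := Finset.dvd_prod_of_mem c (Finset.mem_univ k)
    rw [show (∏ k : Fin n, c k) * γ = c k * (e * γ) by rw [he]; ring]
    exact one_le_mpow_diag (Smat A G) (c k) k (hc2 k hk) (e * γ)
  -- iterate csr_le
  have iter : ∀ e : ℕ, csr A G (t + γ + e * γ) i j ≤ csr A G (t + γ) i j := by
    intro e
    induction e with
    | zero => simp
    | succ e ih =>
      calc csr A G (t + γ + (e+1) * γ) i j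
          = csr A G ((t + γ + e * γ) + γ) i j := by
            congr 1
            ring
        _ ≤ csr A G (t + γ + e * γ) i j := csr_le h1 G hγ (t + γ + e * γ) i j
        _ ≤ csr A G (t + γ) i j := ih
  have hfinal : csr A G (m * γ + t) i j ≤ csr A G (t + γ) i j := by
    obtain ⟨m2, rfl⟩ : ∃ m2, m = m2 + 1 := ⟨m - 1, by omega⟩
    have harith : (m2 + 1) * γ + t = t + γ + m2 * γ := by ring
    rw [harith]
    exact iter m2
  -- now bound csr t by csr (m*γ + t)
  have hstep : csr A G t i j ≤ csr A G (m * γ + t) i j := by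
    show (Finset.univ.sup fun l => mmul (Cmat A G) (mpow (Smat A G) t) i l * Rmat A G l j) ≤ _
    refine Finset.sup_le fun l _ => ?_
    rw [show mmul (Cmat A G) (mpow (Smat A G) t) i l =
      Finset.univ.sup fun k => Cmat A G i k * mpow (Smat A G) t k l from rfl]
    rw [NNReal.finset_sup_mul]
    refine Finset.sup_le fun k _ => ?_
    by_cases hCk : Cmat A G i k = 0
    · rw [hCk, zero_mul, zero_mul]
      exact zero_le
    have hNck : G.Nc k := by
      by_contra hNk
      exact hCk (by simp [Cmat, hNk])
    calc Cmat A G i k * mpow (Smat A G) t k l * Rmat A G l j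
        = Cmat A G i k * (1 * mpow (Smat A G) t k l) * Rmat A G l j := by rw [one_mul]
      _ ≤ Cmat A G i k * (mpow (Smat A G) (m*γ) k k * mpow (Smat A G) t k l) * Rmat A G l j := by
          exact mul_le_mul_left (mul_le_mul_right
            (mul_le_mul_left (hdiag k hNck) _) _) _
      _ ≤ Cmat A G i k * mpow (Smat A G) (m*γ + t) k l * Rmat A G l j := by
          exact mul_le_mul_left (mul_le_mul_right
            (le_mpow_add (Smat A G) (m*γ) t k k l) _) _
      _ ≤ csr A G (m*γ + t) i j := term_le_csr G (m*γ+t) i j k l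
  exact le_trans hstep hfinal

end CSRProof

/-- the CSR products `P^(t) = C ⊗ S^t ⊗ R` are periodic with
period `γ` from the very beginning: `P^(t+γ) = P^(t)` for all `t ≥ 0`. -/
theorem csr_periodic {n : ℕ} (A : Fin n → Fin n → ℝ≥0) (h1 : mcgm A = 1)
    (G : CritSubgraph A) :
    ∀ t : ℕ, csr A G (t + graphCyc G.E) = csr A G t := by
  intro t
  rcases Nat.eq_zero_or_pos (graphCyc G.E) with h0 | hγ
  · rw [h0, Nat.add_zero]
  · funext i j
    exact le_antisymm (csr_le h1 G hγ t i j) (csr_ge h1 G hγ t i j)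

end MaxAlg
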